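/- Let d, m ≥ 1, let b : ℝ^d → ℝ^d and σ : ℝ^d → ℝ^{d×m} be continuous, let V : ℝ^d → ℝ be twice continuously differentiable, fix θ ∈ (0,1), set W = e^{θV} and Ψ = −(LW)/W = θ(−LV − (θ/2)|σᵀ∇V|²), and assume there exist c* > 0 and R* ∈ ℝ with |σᵀ∇V|² ≤ c* Ψ + R* pointwise. Let κ : ℝ^d → [1, ∞) be twice continuously differentiable and suppose there exists C ≥ 0 such that Lκ ≤ Cκ and |σᵀ∇(log κ)| ≤ C pointwise. Then there exists c ∈ ℝ such that L(κW) ≤ c κW pointwise on ℝ^d. -/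

import Mathlib

open Real Matrix MeasureTheory Filter Topology
open scoped BigOperators ENNReal

/-- Partial derivative in direction `i`. -/
noncomputable def pd {d : ℕ} (i : Fin d) (φ : EuclideanSpace ℝ (Fin d) → ℝ)
    (x : EuclideanSpace ℝ (Fin d)) : ℝ :=
  fderiv ℝ φ x (EuclideanSpace.single i 1)

/-- Generator of the diffusion: `Lφ = b·∇φ + S : ∇²φ` with `S = σσᵀ/2`. -/
noncomputable def gen {d m : ℕ}
    (b : EuclideanSpace ℝ (Fin d) → EuclideanSpace ℝ (Fin d))
    (σ : EuclideanSpace ℝ (Fin d) → Matrix (Fin d) (Fin m) ℝ)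
    (φ : EuclideanSpace ℝ (Fin d) → ℝ) (x : EuclideanSpace ℝ (Fin d)) : ℝ :=
  (∑ i, b x i * pd i φ x) +
    ∑ i, ∑ j, ((σ x * (σ x)ᵀ) i j / 2) * pd j (pd i φ) x

/-- `|σᵀ∇V|²`. -/
noncomputable def sigmaGradSq {d m : ℕ}
    (σ : EuclideanSpace ℝ (Fin d) → Matrix (Fin d) (Fin m) ℝ)
    (V : EuclideanSpace ℝ (Fin d) → ℝ) (x : EuclideanSpace ℝ (Fin d)) : ℝ :=
  ∑ k : Fin m, (∑ i, σ x i k * pd i V x) ^ 2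

/-- `f` has compact level sets. -/
def HasCompactLevelSets {α : Type*} [TopologicalSpace α] (f : α → ℝ) : Prop :=
  ∀ M : ℝ, IsCompact {x | f x ≤ M}

/-- `f ∼ g` : there exist `c, c' > 0` and `R, R'` with `c' g − R' ≤ f ≤ c g + R`. -/
def EquivGrowth {α : Type*} (f g : α → ℝ) : Prop :=
  ∃ c c' R R' : ℝ, 0 < c ∧ 0 < c' ∧ ∀ x, c' * g x - R' ≤ f x ∧ f x ≤ c * g x + R

section Helpers

variable {d m : ℕ}

lemma pd_mul' {f g : EuclideanSpace ℝ (Fin d) → ℝ} {x} (i : Fin d)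
    (hf : DifferentiableAt ℝ f x) (hg : DifferentiableAt ℝ g x) :
    pd i (fun y => f y * g y) x = f x * pd i g x + g x * pd i f x := by
  simp [pd, fderiv_fun_mul hf hg]

lemma pd_add' {f g : EuclideanSpace ℝ (Fin d) → ℝ} {x} (i : Fin d)
    (hf : DifferentiableAt ℝ f x) (hg : DifferentiableAt ℝ g x) :
    pd i (fun y => f y + g y) x = pd i f x + pd i g x := by
  simp [pd, fderiv_fun_add hf hg]

lemma pd_exp' {V : EuclideanSpace ℝ (Fin d) → ℝ} {x} (θ : ℝ) (i : Fin d)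
    (hV : DifferentiableAt ℝ V x) :
    pd i (fun y => Real.exp (θ * V y)) x = θ * Real.exp (θ * V x) * pd i V x := by
  have h1 : HasFDerivAt (fun y => θ * V y) (θ • fderiv ℝ V x) x := (hV.hasFDerivAt).const_mul θ
  have h2 : HasFDerivAt (fun y => Real.exp (θ * V y)) (Real.exp (θ * V x) • θ • fderiv ℝ V x) x :=
    (Real.hasDerivAt_exp (θ * V x)).comp_hasFDerivAt (h₂ := Real.exp) x h1
  rw [pd, h2.fderiv]
  simp [pd]; ring

lemma pd_log' {κ : EuclideanSpace ℝ (Fin d) → ℝ} {x} (i : Fin d)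
    (hκ : DifferentiableAt ℝ κ x) (h0 : κ x ≠ 0) :
    pd i (fun y => Real.log (κ y)) x = pd i κ x / κ x := by
  have h2 : HasFDerivAt (fun y => Real.log (κ y)) ((κ x)⁻¹ • fderiv ℝ κ x) x :=
    (Real.hasDerivAt_log h0).comp_hasFDerivAt x hκ.hasFDerivAt
  rw [pd, h2.fderiv]
  simp [pd]; ring

lemma differentiable_pd' {φ : EuclideanSpace ℝ (Fin d) → ℝ} (hφ : ContDiff ℝ 2 φ) (i : Fin d) :
    Differentiable ℝ (pd i φ) := by
  have h1 : ContDiff ℝ 1 (fderiv ℝ φ) := hφ.fderiv_right (le_refl 2)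
  exact ((ContinuousLinearMap.apply ℝ ℝ (EuclideanSpace.single i 1)).contDiff.comp
    h1).differentiable one_ne_zero

lemma pd2_mul' {f g : EuclideanSpace ℝ (Fin d) → ℝ} {x} (i j : Fin d)
    (hf : ContDiff ℝ 2 f) (hg : ContDiff ℝ 2 g) :
    pd j (pd i (fun y => f y * g y)) x
      = f x * pd j (pd i g) x + pd j f x * pd i g x
        + g x * pd j (pd i f) x + pd j g x * pd i f x := by
  have hfd : Differentiable ℝ f := hf.differentiable (by norm_num)
  have hgd : Differentiable ℝ g := hg.differentiable (by norm_num)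
  have h1 : pd i (fun y => f y * g y) = fun y => f y * pd i g y + g y * pd i f y := by
    funext y; exact pd_mul' i (hfd y) (hgd y)
  rw [h1]
  have e1 : pd j (fun y => f y * pd i g y + g y * pd i f y) x
      = pd j (fun y => f y * pd i g y) x + pd j (fun y => g y * pd i f y) x :=
    pd_add' j ((hfd x).mul (differentiable_pd' hg i x)) ((hgd x).mul (differentiable_pd' hf i x))
  rw [e1, pd_mul' j (hfd x) (differentiable_pd' hg i x),
    pd_mul' j (hgd x) (differentiable_pd' hf i x)]
  ring

lemma gen_mul' (b : EuclideanSpace ℝ (Fin d) → EuclideanSpace ℝ (Fin d))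
    (σ : EuclideanSpace ℝ (Fin d) → Matrix (Fin d) (Fin m) ℝ)
    {f g : EuclideanSpace ℝ (Fin d) → ℝ} (hf : ContDiff ℝ 2 f) (hg : ContDiff ℝ 2 g)
    (x : EuclideanSpace ℝ (Fin d)) :
    gen b σ (fun y => f y * g y) x
      = f x * gen b σ g x + g x * gen b σ f x
        + ∑ i, ∑ j, ((σ x * (σ x)ᵀ) i j / 2) * (pd j f x * pd i g x + pd j g x * pd i f x) := by
  have hfd : Differentiable ℝ f := hf.differentiable (by norm_num)
  have hgd : Differentiable ℝ g := hg.differentiable (by norm_num)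
  unfold gen
  have h1 : ∀ i : Fin d, pd i (fun y => f y * g y) x = f x * pd i g x + g x * pd i f x :=
    fun i => pd_mul' i (hfd x) (hgd x)
  have h2 : ∀ i j : Fin d, pd j (pd i (fun y => f y * g y)) x
      = f x * pd j (pd i g) x + pd j f x * pd i g x
        + g x * pd j (pd i f) x + pd j g x * pd i f x := fun i j => pd2_mul' i j hf hg
  simp only [h1, h2]
  have hA : (∑ i, b x i * (f x * pd i g x + g x * pd i f x))
      = (∑ i, f x * (b x i * pd i g x)) + ∑ i, g x * (b x i * pd i f x) := by
    rw [← Finset.sum_add_distrib]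
    exact Finset.sum_congr rfl fun i _ => by ring
  have hD : (∑ i, ∑ j, ((σ x * (σ x)ᵀ) i j / 2)
        * (f x * pd j (pd i g) x + pd j f x * pd i g x + g x * pd j (pd i f) x
            + pd j g x * pd i f x))
      = (∑ i, ∑ j, f x * (((σ x * (σ x)ᵀ) i j / 2) * pd j (pd i g) x))
        + (∑ i, ∑ j, g x * (((σ x * (σ x)ᵀ) i j / 2) * pd j (pd i f) x))
        + ∑ i, ∑ j, ((σ x * (σ x)ᵀ) i j / 2) * (pd j f x * pd i g x + pd j g x * pd i f x) := by
    rw [← Finset.sum_add_distrib, ← Finset.sum_add_distrib]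
    refine Finset.sum_congr rfl fun i _ => ?_
    rw [← Finset.sum_add_distrib, ← Finset.sum_add_distrib]
    exact Finset.sum_congr rfl fun j _ => by ring
  rw [hA, hD, ← Finset.mul_sum, ← Finset.mul_sum]
  simp only [← Finset.mul_sum]
  ring

lemma cross_sum' (σx : Matrix (Fin d) (Fin m) ℝ) (a v : Fin d → ℝ) :
    ∑ i, ∑ j, ((σx * σxᵀ) i j / 2) * (a j * v i + v j * a i)
      = ∑ k, (∑ i, σx i k * a i) * (∑ i, σx i k * v i) := by
  have key : ∀ k : Fin m, (∑ i, ∑ j, (σx i k * σx j k / 2) * (a j * v i + v j * a i))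
      = (∑ i, σx i k * a i) * (∑ i, σx i k * v i) := by
    intro k
    have h1 : (∑ i, ∑ j, (σx i k * σx j k / 2) * (a j * v i + v j * a i))
        = (∑ i, ∑ j, ((σx i k * v i) * (σx j k * a j) / 2
            + (σx i k * a i) * (σx j k * v j) / 2)) :=
      Finset.sum_congr rfl fun i _ => Finset.sum_congr rfl fun j _ => by ring
    rw [h1]
    simp only [Finset.sum_add_distrib, ← Finset.sum_div]
    rw [← Finset.sum_mul_sum, ← Finset.sum_mul_sum]
    ring
  have step1 : (∑ i, ∑ j, ((σx * σxᵀ) i j / 2) * (a j * v i + v j * a i))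
      = ∑ i, ∑ j, ∑ k, (σx i k * σx j k / 2) * (a j * v i + v j * a i) := by
    refine Finset.sum_congr rfl fun i _ => Finset.sum_congr rfl fun j _ => ?_
    rw [Matrix.mul_apply]
    simp only [Matrix.transpose_apply]
    rw [Finset.sum_div, Finset.sum_mul]
  rw [step1]
  have step2 : (∑ i : Fin d, ∑ j : Fin d, ∑ k : Fin m,
        (σx i k * σx j k / 2) * (a j * v i + v j * a i))
      = ∑ k : Fin m, ∑ i : Fin d, ∑ j : Fin d,
        (σx i k * σx j k / 2) * (a j * v i + v j * a i) := by
    trans (∑ i : Fin d, ∑ k : Fin m, ∑ j : Fin d,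
      (σx i k * σx j k / 2) * (a j * v i + v j * a i))
    · exact Finset.sum_congr rfl fun i _ => Finset.sum_comm
    · exact Finset.sum_comm
  rw [step2]
  exact Finset.sum_congr rfl fun k _ => key k

lemma cauchy' (u v : Fin m → ℝ) :
    (∑ k, u k * v k) ≤ Real.sqrt (∑ k, (u k)^2) * Real.sqrt (∑ k, (v k)^2) := by
  simpa [sq] using Real.sum_mul_le_sqrt_mul_sqrt Finset.univ u v

end Helpers

/-- If `|σᵀ∇V|² ≤ c* Ψ + R*` with `Ψ = −L(e^{θV})/e^{θV}
= θ(−LV − (θ/2)|σᵀ∇V|²)`, and `κ ≥ 1` satisfies `Lκ ≤ Cκ`, `|σᵀ∇ log κ| ≤ C`, then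
`L(κW) ≤ c κW` for some `c`. -/
theorem stmt1 (d m : ℕ) (hd : 1 ≤ d) (hm : 1 ≤ m)
    (b : EuclideanSpace ℝ (Fin d) → EuclideanSpace ℝ (Fin d))
    (σ : EuclideanSpace ℝ (Fin d) → Matrix (Fin d) (Fin m) ℝ)
    (hb : Continuous b) (hσ : Continuous σ)
    (V : EuclideanSpace ℝ (Fin d) → ℝ) (hV : ContDiff ℝ 2 V)
    (θ : ℝ) (hθ : θ ∈ Set.Ioo (0:ℝ) 1)
    (hΨ : ∀ x, -(gen b σ (fun y => Real.exp (θ * V y)) x) / Real.exp (θ * V x)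
        = θ * (-(gen b σ V x) - θ / 2 * sigmaGradSq σ V x))
    (hcontrol : ∃ cstar : ℝ, 0 < cstar ∧ ∃ Rstar : ℝ, ∀ x,
      sigmaGradSq σ V x
        ≤ cstar * (-(gen b σ (fun y => Real.exp (θ * V y)) x) / Real.exp (θ * V x)) + Rstar)
    (κ : EuclideanSpace ℝ (Fin d) → ℝ) (hκ1 : ∀ x, 1 ≤ κ x) (hκ : ContDiff ℝ 2 κ)
    (hκC : ∃ C : ℝ, 0 ≤ C ∧ ∀ x,
      gen b σ κ x ≤ C * κ x ∧
      Real.sqrt (sigmaGradSq σ (fun y => Real.log (κ y)) x) ≤ C) :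
    ∃ c : ℝ, ∀ x,
      gen b σ (fun y => κ y * Real.exp (θ * V y)) x ≤ c * (κ x * Real.exp (θ * V x)) := by
  obtain ⟨hθ0, hθ1⟩ := hθ
  obtain ⟨cs, hcs, Rs, hR⟩ := hcontrol
  obtain ⟨C, hC0, hCx⟩ := hκC
  have hW : ContDiff ℝ 2 (fun y => Real.exp (θ * V y)) :=
    Real.contDiff_exp.comp (contDiff_const.mul hV)
  refine ⟨Rs / cs + C + (θ * C)^2 * cs / 4, fun x => ?_⟩
  set Ex : ℝ := Real.exp (θ * V x) with hExdef
  have hEx : 0 < Ex := Real.exp_pos _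
  have hκx : 0 < κ x := lt_of_lt_of_le one_pos (hκ1 x)
  set s : ℝ := sigmaGradSq σ V x with hsdef
  have hs0 : 0 ≤ s := Finset.sum_nonneg fun k _ => sq_nonneg _
  set a : ℝ := Real.sqrt s with hadef
  have ha0 : 0 ≤ a := Real.sqrt_nonneg _
  have ha2 : a ^ 2 = s := Real.sq_sqrt hs0
  -- product rule
  have hprod := gen_mul' b σ hκ hW x
  -- rewrite the cross term
  have hpdW : ∀ i : Fin d, pd i (fun y => Real.exp (θ * V y)) x = θ * Ex * pd i V x :=
    fun i => pd_exp' θ i (hV.differentiable (by norm_num) x)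
  have hcross : (∑ i, ∑ j, ((σ x * (σ x)ᵀ) i j / 2)
        * (pd j κ x * pd i (fun y => Real.exp (θ * V y)) x
            + pd j (fun y => Real.exp (θ * V y)) x * pd i κ x))
      = θ * Ex * ∑ k, (∑ i, σ x i k * pd i κ x) * (∑ i, σ x i k * pd i V x) := by
    rw [← cross_sum' (σ x) (fun i => pd i κ x) (fun i => pd i V x), Finset.mul_sum]
    refine Finset.sum_congr rfl fun i _ => ?_
    rw [Finset.mul_sum]
    refine Finset.sum_congr rfl fun j _ => ?_
    rw [hpdW i, hpdW j]
    ring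
  -- bound on |σᵀ∇κ|
  have hκne : κ x ≠ 0 := ne_of_gt hκx
  have hlog : ∀ i : Fin d, pd i (fun y => Real.log (κ y)) x = pd i κ x / κ x :=
    fun i => pd_log' i (hκ.differentiable (by norm_num) x) hκne
  have hsum : (∑ k : Fin m, (∑ i, σ x i k * pd i κ x)^2)
      = (κ x)^2 * sigmaGradSq σ (fun y => Real.log (κ y)) x := by
    unfold sigmaGradSq
    rw [Finset.mul_sum]
    refine Finset.sum_congr rfl fun k _ => ?_
    simp only [hlog]
    rw [show (∑ i, σ x i k * (pd i κ x / κ x)) = (∑ i, σ x i k * pd i κ x) / κ x by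
      rw [Finset.sum_div]; exact Finset.sum_congr rfl fun i _ => (mul_div_assoc _ _ _).symm]
    rw [div_pow]
    field_simp
  have hsqκ : Real.sqrt (∑ k : Fin m, (∑ i, σ x i k * pd i κ x)^2) ≤ C * κ x := by
    rw [hsum, Real.sqrt_mul (sq_nonneg _), Real.sqrt_sq hκx.le]
    calc κ x * Real.sqrt (sigmaGradSq σ (fun y => Real.log (κ y)) x)
        ≤ κ x * C := mul_le_mul_of_nonneg_left ((hCx x).2) hκx.le
      _ = C * κ x := mul_comm _ _
  -- Cauchy-Schwarz
  have hCS : (∑ k, (∑ i, σ x i k * pd i κ x) * (∑ i, σ x i k * pd i V x)) ≤ C * κ x * a := by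
    calc (∑ k, (∑ i, σ x i k * pd i κ x) * (∑ i, σ x i k * pd i V x))
        ≤ Real.sqrt (∑ k : Fin m, (∑ i, σ x i k * pd i κ x)^2)
            * Real.sqrt (∑ k : Fin m, (∑ i, σ x i k * pd i V x)^2) :=
          cauchy' _ _
      _ = Real.sqrt (∑ k : Fin m, (∑ i, σ x i k * pd i κ x)^2) * a := by rw [hadef, hsdef]; rfl
      _ ≤ (C * κ x) * a := mul_le_mul_of_nonneg_right hsqκ ha0
  -- bound on gen W
  have hq : gen b σ (fun y => Real.exp (θ * V y)) x ≤ (Rs - s) / cs * Ex := by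
    have h := hR x
    rw [← hsdef, ← hExdef] at h
    rw [div_mul_eq_mul_div, le_div_iff₀ hcs]
    have h2 : (-(gen b σ (fun y => Real.exp (θ * V y)) x) / Ex) * Ex
        = -(gen b σ (fun y => Real.exp (θ * V y)) x) := div_mul_cancel₀ _ hEx.ne'
    nlinarith [mul_le_mul_of_nonneg_right h hEx.le]
  -- assemble
  have hgenκ := (hCx x).1
  rw [hprod, hcross, ← hExdef]
  have hmain : κ x * gen b σ (fun y => Real.exp (θ * V y)) x
        + Ex * gen b σ κ x
        + θ * Ex * ∑ k, (∑ i, σ x i k * pd i κ x) * (∑ i, σ x i k * pd i V x)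
      ≤ κ x * ((Rs - s) / cs * Ex) + Ex * (C * κ x) + θ * Ex * (C * κ x * a) := by
    have t1 : κ x * gen b σ (fun y => Real.exp (θ * V y)) x ≤ κ x * ((Rs - s) / cs * Ex) :=
      mul_le_mul_of_nonneg_left hq hκx.le
    have t2 : Ex * gen b σ κ x ≤ Ex * (C * κ x) := mul_le_mul_of_nonneg_left hgenκ hEx.le
    have t3 : θ * Ex * ∑ k, (∑ i, σ x i k * pd i κ x) * (∑ i, σ x i k * pd i V x)
        ≤ θ * Ex * (C * κ x * a) :=
      mul_le_mul_of_nonneg_left hCS (by positivity)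
    linarith
  refine le_trans hmain ?_
  -- numeric bracket bound
  have key : θ * C * a ≤ a^2 / cs + (θ * C)^2 * cs / 4 := by
    rw [← sub_nonneg]
    have hh : a^2 / cs + (θ * C)^2 * cs / 4 - θ * C * a = (2 * a - θ * C * cs)^2 / (4 * cs) := by
      field_simp
      ring
    rw [hh]
    positivity
  have hbr : (Rs - s) / cs + C + θ * C * a ≤ Rs / cs + C + (θ * C)^2 * cs / 4 := by
    rw [sub_div] at *
    have : s / cs = a^2 / cs := by rw [ha2]
    linarith [key, this.ge, this.le]
  calc κ x * ((Rs - s) / cs * Ex) + Ex * (C * κ x) + θ * Ex * (C * κ x * a)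
      = (κ x * Ex) * ((Rs - s) / cs + C + θ * C * a) := by ring
    _ ≤ (κ x * Ex) * (Rs / cs + C + (θ * C)^2 * cs / 4) :=
        mul_le_mul_of_nonneg_left hbr (by positivity)
    _ = (Rs / cs + C + (θ * C)^2 * cs / 4) * (κ x * Ex) := mul_comm _ _
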